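/- For any DAG G and any nodes i,j and conditioning set K ⊆ V \ {i,j} with |K| ≤ 1, i and j are d-separated given K if and only if they are *-separated given K. -/

import Mathlib

variable {V : Type*}

/-- Undirected adjacency in a digraph given by edge relation `E`. -/
def Adjd (E : V → V → Prop) (i j : V) : Prop := E i j ∨ E j i

/-- Parents of a node. -/
def pa (E : V → V → Prop) (j : V) : Set V := {u | E u j}

/-- A directed path from `i` to `j`, as a nonrepeating list of consecutive vertices. -/
def IsDirPath (E : V → V → Prop) (p : List V) (i j : V) : Prop :=
  p.Chain' E ∧ p.head? = some i ∧ p.getLast? = some j ∧ p.Nodup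

/-- An undirected path from `i` to `j`. -/
def IsUndirPath (E : V → V → Prop) (p : List V) (i j : V) : Prop :=
  p.Chain' (Adjd E) ∧ p.head? = some i ∧ p.getLast? = some j ∧ p.Nodup

/-- Interior (non-endpoint) vertices of a path. -/
def interiorL (p : List V) : List V := (p.drop 1).dropLast

/-- `k` is a collider on the path `p`: both path-edges at `k` point into `k`. -/
def IsColliderOn (E : V → V → Prop) (p : List V) (k : V) : Prop :=
  ∃ (l₁ l₂ : List V) (a b : V), p = l₁ ++ a :: k :: b :: l₂ ∧ E a k ∧ E b k

/-- A digraph is acyclic if it has no directed cycles. -/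
def Acyclic (E : V → V → Prop) : Prop := ∀ i, ¬ Relation.TransGen E i i

/-- `k ∈ An(K)`: `k` lies in `K` or is an ancestor of a member of `K`. -/
def InAn (E : V → V → Prop) (K : Set V) (k : V) : Prop :=
  k ∈ K ∨ ∃ m ∈ K, Relation.TransGen E k m

/-- The path `p` is d-connecting between `i` and `j` given `K`. -/
def DConnecting (E : V → V → Prop) (K : Set V) (p : List V) (i j : V) : Prop :=
  IsUndirPath E p i j ∧
  (∀ k, IsColliderOn E p k → InAn E K k) ∧
  (∀ k, k ∈ interiorL p → ¬ IsColliderOn E p k → k ∉ K)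

/-- d-separation of `i` and `j` given `K`. -/
def DSep (E : V → V → Prop) (K : Set V) (i j : V) : Prop :=
  ¬ ∃ p, DConnecting E K p i j

/-- The path `p` is *-connecting: d-connecting with at most one collider. -/
def StarConnecting (E : V → V → Prop) (K : Set V) (p : List V) (i j : V) : Prop :=
  DConnecting E K p i j ∧
  ∀ k₁ k₂, IsColliderOn E p k₁ → IsColliderOn E p k₂ → k₁ = k₂

/-- *-separation of `i` and `j` given `K`. -/
def StarSep (E : V → V → Prop) (K : Set V) (i j : V) : Prop :=
  ¬ ∃ p, StarConnecting E K p i j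

/-- The weight of a directed path: product of its edge weights. -/
def pathWeight (C : V → V → ℝ) (p : List V) : ℝ :=
  ((p.zip p.tail).map fun q => C q.1 q.2).prod

/-- A critical (maximum-weight) directed path from `i` to `j`. -/
def IsCritical (E : V → V → Prop) (C : V → V → ℝ) (p : List V) (i j : V) : Prop :=
  IsDirPath E p i j ∧ 2 ≤ p.length ∧
  ∀ q, IsDirPath E q i j → 2 ≤ q.length → pathWeight C q ≤ pathWeight C p

/-- Genericity of the weights: critical paths are unique when they exist. -/
def Generic (E : V → V → Prop) (C : V → V → ℝ) : Prop :=
  ∀ i j p q, IsCritical E C p i j → IsCritical E C q i j → p = q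

/-- Positivity of the edge weights. -/
def PosWeights (E : V → V → Prop) (C : V → V → ℝ) : Prop :=
  ∀ a b, E a b → 0 < C a b

/-- Edge of the weighted transitive reduction `G^tr_C`: the edge `i → j` is present in `G`
and every other directed `i`-`j` path has strictly smaller weight. -/
def TrEdge (E : V → V → Prop) (C : V → V → ℝ) (i j : V) : Prop :=
  E i j ∧ ∀ q, IsDirPath E q i j → 2 ≤ q.length → q ≠ [i, j] → pathWeight C q < C i j

/-- A path factors through `K` (relative to endpoints `i`,`j`). -/
def FactorsThrough (p : List V) (K : Set V) (i j : V) : Prop :=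
  ∃ k ∈ interiorL p, k ∈ K ∧ k ≠ i ∧ k ≠ j

/-- Edge of the critical DAG `G*_K(C)`. -/
def CritEdge (E : V → V → Prop) (C : V → V → ℝ) (K : Set V) (i j : V) : Prop :=
  (∃ p, IsDirPath E p i j ∧ 2 ≤ p.length) ∧
  ∀ p, IsCritical E C p i j → ¬ FactorsThrough p K i j

/-- `i` and `j` are C*-connected given `K`: one of the five types of connecting
paths exists in the critical DAG `G*_K(C)`. -/
def CStarConnected (E : V → V → Prop) (C : V → V → ℝ) (K : Set V) (i j : V) : Prop :=
  (CritEdge E C K i j ∨ CritEdge E C K j i) ∨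
  (∃ p, p ∉ K ∧ CritEdge E C K p i ∧ CritEdge E C K p j) ∨
  (∃ l ∈ K, CritEdge E C K i l ∧ CritEdge E C K j l) ∨
  (∃ p, ∃ l ∈ K, p ∉ K ∧ CritEdge E C K p i ∧ CritEdge E C K p l ∧ CritEdge E C K j l) ∨
  (∃ p, ∃ l ∈ K, p ∉ K ∧ CritEdge E C K p j ∧ CritEdge E C K p l ∧ CritEdge E C K i l) ∨
  (∃ p q, ∃ l ∈ K, p ∉ K ∧ q ∉ K ∧ CritEdge E C K p i ∧ CritEdge E C K p l ∧
    CritEdge E C K q l ∧ CritEdge E C K q j)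

/-- C*-separation of `i` and `j` given `K`. -/
def CStarSep (E : V → V → Prop) (C : V → V → ℝ) (K : Set V) (i j : V) : Prop :=
  ¬ CStarConnected E C K i j

/-- `b` immediately follows `a` in the cyclic order given by the list `p`. -/
def CycConsec (p : List V) (a b : V) : Prop :=
  ∃ t : Fin p.length, p.get t = a ∧
    p.get ⟨(t.val + 1) % p.length, Nat.mod_lt _ t.pos⟩ = b

/-- The list `p` enumerates, in cyclic order, an induced subgraph of the digraph `E`
which is (as an undirected graph) a simple cycle. -/
def IsInducedCycleList (E : V → V → Prop) (p : List V) : Prop :=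
  p.Nodup ∧ 3 ≤ p.length ∧
  ∀ a ∈ p, ∀ b ∈ p, (Adjd E a b ↔ (CycConsec p a b ∨ CycConsec p b a))

/-- `k` is a collider of the induced cycle `p`: both incident cycle edges point into `k`. -/
def CycCollider (E : V → V → Prop) (p : List V) (k : V) : Prop :=
  ∃ a b, a ≠ b ∧ CycConsec p a k ∧ CycConsec p k b ∧ E a k ∧ E b k

namespace List

def get? {α : Type*} (l : List α) (n : ℕ) : Option α := l[n]?

@[simp] theorem get?_eq_getElem? {α : Type*} (l : List α) (n : ℕ) : l.get? n = l[n]? := rfl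

@[simp] theorem chain'_iff_isChain {α : Type*} {R : α → α → Prop} {l : List α} :
    Chain' R l ↔ IsChain R l := Iff.rfl

@[simp] theorem chain_iff_isChain {α : Type*} {R : α → α → Prop} {a : α} {l : List α} :
    Chain R a l ↔ IsChain R (a :: l) := Iff.rfl

theorem get?_eq_get {α : Type*} {l : List α} {n : ℕ} (h : n < l.length) :
    l.get? n = some (l.get ⟨n, h⟩) := by simp [h]

theorem get?_eq_some {α : Type*} {l : List α} {n : ℕ} {a : α} :
    l.get? n = some a ↔ ∃ h : n < l.length, l.get ⟨n, h⟩ = a := by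
  simp [List.getElem?_eq_some_iff]

theorem get?_append_right {α : Type*} {l₁ l₂ : List α} {n : ℕ} (h : l₁.length ≤ n) :
    (l₁ ++ l₂).get? n = l₂.get? (n - l₁.length) := by simp [List.getElem?_append_right h]

theorem get?_append {α : Type*} {l₁ l₂ : List α} {n : ℕ} (h : n < l₁.length) :
    (l₁ ++ l₂).get? n = l₁.get? n := by simp [List.getElem?_append_left h]

theorem get?_take {α : Type*} {l : List α} {n m : ℕ} (h : m < n) :
    (l.take n).get? m = l.get? m := by simp [List.getElem?_take, h]

theorem get?_drop {α : Type*} {l : List α} {i j : ℕ} : (l.drop i).get? j = l.get? (i + j) := by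
  simp

theorem get?_reverse {α : Type*} {l : List α} {i : ℕ} (h : i < l.length) :
    l.reverse.get? i = l.get? (l.length - 1 - i) := by simp [List.getElem?_reverse h]

theorem get?_mem {α : Type*} {l : List α} {n : ℕ} {a : α} (h : l.get? n = some a) : a ∈ l :=
  List.mem_of_getElem? h

theorem get?_zero {α : Type*} {l : List α} : l.get? 0 = l.head? := by cases l <;> simp

theorem get?_cons_succ {α : Type*} {a : α} {l : List α} {n : ℕ} :
    (a :: l).get? (n+1) = l.get? n := by simp

theorem getLast?_eq_get? {α : Type*} {l : List α} : l.getLast? = l.get? (l.length - 1) := by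
  simp [List.getLast?_eq_getElem?]

theorem mem_iff_get? {α : Type*} {l : List α} {a : α} : a ∈ l ↔ ∃ n, l.get? n = some a := by
  simp [List.mem_iff_getElem?]

theorem get?_inj {α : Type*} {xs : List α} {i j : ℕ} (h₀ : i < xs.length) (h₁ : xs.Nodup)
    (h₂ : xs.get? i = xs.get? j) : i = j := by
  simp only [get?_eq_getElem?, List.getElem?_eq_getElem h₀] at h₂
  obtain ⟨hj, e⟩ := List.getElem?_eq_some_iff.mp h₂.symm
  exact (h₁.getElem_inj_iff).mp e.symm

theorem drop_eq_get_cons {α : Type*} {l : List α} {n : ℕ} (h : n < l.length) :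
    l.drop n = l.get ⟨n, h⟩ :: l.drop (n+1) := List.drop_eq_getElem_cons h

theorem chain'_iff_get {α : Type*} {R : α → α → Prop} {l : List α} :
    Chain' R l ↔ ∀ i (h : i < l.length - 1),
      R (l.get ⟨i, by omega⟩) (l.get ⟨i+1, by omega⟩) := by
  rw [chain'_iff_isChain, isChain_iff_getElem]
  constructor
  · intro h i hi; exact h i (by omega)
  · intro h i hi; exact h i (by omega)

theorem chain_split {α : Type*} {R : α → α → Prop} {a b : α} {l₁ l₂ : List α} :
    Chain R a (l₁ ++ b :: l₂) ↔ Chain R a (l₁ ++ [b]) ∧ Chain R b l₂ := by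
  simp only [chain_iff_isChain, ← List.cons_append]
  exact isChain_split

theorem chain'_reverse {α : Type*} {R : α → α → Prop} {l : List α} :
    Chain' R l.reverse ↔ Chain' (flip R) l := isChain_reverse

theorem chain'_cons' {α : Type*} {R : α → α → Prop} {x : α} {l : List α} :
    Chain' R (x :: l) ↔ (∀ y ∈ l.head?, R x y) ∧ Chain' R l := isChain_cons

theorem Chain'.imp {α : Type*} {R S : α → α → Prop} (H : ∀ a b, R a b → S a b) {l : List α}
    (p : Chain' R l) : Chain' S l := IsChain.imp (fun a b h => H a b h) p

theorem Chain'.prefix {α : Type*} {R : α → α → Prop} {l l₁ : List α} (h : Chain' R l)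
    (h' : l₁ <+: l) : Chain' R l₁ := IsChain.prefix h h'

end List

/-- positional collider -/
def WC (E : V → V → Prop) (w : List V) (n : ℕ) (k : V) : Prop :=
  ∃ a b, w.get? n = some a ∧ w.get? (n+1) = some k ∧ w.get? (n+2) = some b ∧ E a k ∧ E b k

def NoColl (E : V → V → Prop) (w : List V) : Prop := ∀ n k, ¬ WC E w n k

def GW (E : V → V → Prop) (K : Set V) (i j : V) (w : List V) : Prop :=
  w.Chain' (Adjd E) ∧ w.head? = some i ∧ w.getLast? = some j ∧
  (∀ n k, WC E w n k → InAn E K k) ∧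
  (∀ n k, w.get? (n+1) = some k → n + 2 < w.length → ¬ WC E w n k → k ∉ K) ∧
  (∀ n₁ k₁ n₂ k₂, WC E w n₁ k₁ → WC E w n₂ k₂ → n₁ = n₂)

lemma gsome {w : List V} {n : ℕ} {a : V} (h : w.get? n = some a) : n < w.length := by
  rcases List.get?_eq_some.mp h with ⟨h', _⟩; exact h'

lemma gsome' {w : List V} {n : ℕ} (h : n < w.length) : ∃ a, w.get? n = some a := by
  rcases List.get?_eq_some.mp (List.get?_eq_get h) with ⟨h', _⟩
  exact ⟨w.get ⟨n, h⟩, List.get?_eq_get h⟩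

lemma chain'_get? {R : V → V → Prop} {w : List V} (h : w.Chain' R) {m : ℕ} {x y : V}
    (hx : w.get? m = some x) (hy : w.get? (m+1) = some y) : R x y := by
  have hm1 := gsome hy
  have h' := List.chain'_iff_get.mp h m (by omega)
  rw [List.get?_eq_get (by omega), Option.some_inj] at hx
  rw [List.get?_eq_get (by omega), Option.some_inj] at hy
  exact hx ▸ hy ▸ h'

lemma get?_mid (A u C : List V) {m : ℕ} (hm : m < u.length) :
    (A ++ u ++ C).get? (A.length + m) = u.get? m := by
  rw [List.append_assoc, List.get?_append_right (by omega)]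
  simp only [Nat.add_sub_cancel_left]
  rw [List.get?_append hm]

lemma WC_infix {E : V → V → Prop} {u : List V} {n : ℕ} {k : V} (A C : List V)
    (h : WC E u n k) : WC E (A ++ u ++ C) (A.length + n) k := by
  obtain ⟨a, b, ha, hk, hb, e1, e2⟩ := h
  refine ⟨a, b, ?_, ?_, ?_, e1, e2⟩
  · rw [get?_mid A u C (gsome ha)]; exact ha
  · rw [show A.length + n + 1 = A.length + (n+1) by omega, get?_mid A u C (gsome hk), hk]
  · rw [show A.length + n + 2 = A.length + (n+2) by omega, get?_mid A u C (gsome hb), hb]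

lemma WC_rev {E : V → V → Prop} {w : List V} {n : ℕ} {k : V} (h : WC E w n k) :
    WC E w.reverse (w.length - n - 3) k := by
  obtain ⟨a, b, ha, hk, hb, e1, e2⟩ := h
  have hL := gsome hb
  refine ⟨b, a, ?_, ?_, ?_, e2, e1⟩
  · rw [List.get?_reverse (show w.length - n - 3 < w.length by omega),
      show w.length - 1 - (w.length - n - 3) = n + 2 by omega, hb]
  · rw [List.get?_reverse (show w.length - n - 3 + 1 < w.length by omega),
      show w.length - 1 - (w.length - n - 3 + 1) = n + 1 by omega, hk]
  · rw [List.get?_reverse (show w.length - n - 3 + 2 < w.length by omega),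
      show w.length - 1 - (w.length - n - 3 + 2) = n by omega, ha]

lemma NoColl_rev {E : V → V → Prop} {w : List V} (h : NoColl E w) : NoColl E w.reverse := by
  intro n k hc
  have := WC_rev hc
  rw [List.reverse_reverse] at this
  exact h _ _ this

lemma InAn_of_reach {E : V → V → Prop} {K : Set V} {v k : V}
    (h : Relation.ReflTransGen E v k) (hk : InAn E K k) : InAn E K v := by
  rcases Relation.reflTransGen_iff_eq_or_transGen.mp h with rfl | htg
  · exact hk
  · rcases hk with hk | ⟨m, hm, htg'⟩
    · exact Or.inr ⟨k, hk, htg⟩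
    · exact Or.inr ⟨m, hm, htg.trans htg'⟩

lemma isColliderOn_iff_WC {E : V → V → Prop} {p : List V} {k : V} :
    IsColliderOn E p k ↔ ∃ n, WC E p n k := by
  constructor
  · rintro ⟨l₁, l₂, a, b, rfl, ha, hb⟩
    refine ⟨l₁.length, a, b, ?_, ?_, ?_, ha, hb⟩
    · rw [List.get?_append_right le_rfl]; simp
    · rw [List.get?_append_right (by omega)]
      simp [show l₁.length + 1 - l₁.length = 1 by omega]
    · rw [List.get?_append_right (by omega)]
      simp [show l₁.length + 2 - l₁.length = 2 by omega]
  · rintro ⟨n, a, b, ha, hk, hb, e1, e2⟩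
    refine ⟨p.take n, p.drop (n+3), a, b, ?_, e1, e2⟩
    have h1 : p.drop n = a :: p.drop (n+1) := by
      rw [List.drop_eq_get_cons (gsome ha)]
      congr 1
      rw [List.get?_eq_get (gsome ha), Option.some_inj] at ha; exact ha
    have h2 : p.drop (n+1) = k :: p.drop (n+2) := by
      rw [List.drop_eq_get_cons (gsome hk)]
      congr 1
      rw [List.get?_eq_get (gsome hk), Option.some_inj] at hk; exact hk
    have h3 : p.drop (n+2) = b :: p.drop (n+3) := by
      rw [List.drop_eq_get_cons (gsome hb)]
      congr 1
      rw [List.get?_eq_get (gsome hb), Option.some_inj] at hb; exact hb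
    conv_lhs => rw [← List.take_append_drop n p, h1, h2, h3]

lemma mem_interior_iff {p : List V} {k : V} :
    k ∈ interiorL p ↔ ∃ n, p.get? (n+1) = some k ∧ n + 2 < p.length := by
  unfold interiorL
  rw [List.dropLast_eq_take, List.mem_iff_get?]
  constructor
  · rintro ⟨n, hn⟩
    have hlt : n < (p.drop 1).length - 1 := by
      have := gsome hn; simpa using this
    rw [List.get?_take (by omega), List.get?_drop] at hn
    exact ⟨n, by simpa [Nat.add_comm] using hn, by simp at hlt; omega⟩
  · rintro ⟨n, hn, hlen⟩
    refine ⟨n, ?_⟩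
    rw [List.get?_take (by simp; omega), List.get?_drop]
    simpa [Nat.add_comm] using hn

lemma transgen_chain_aux {E : V → V → Prop} {c l : V} (h : Relation.TransGen E c l) :
    ∃ M : List V, List.Chain E c (M ++ [l]) := by
  induction h with
  | single h => exact ⟨[], List.Chain.cons h List.Chain.nil⟩
  | @tail b c₂ hdummy h ih =>
      obtain ⟨M, hM⟩ := ih
      refine ⟨M ++ [b], ?_⟩
      rw [List.append_assoc]
      exact List.chain_split.mpr ⟨hM, List.Chain.cons h List.Chain.nil⟩

lemma chain_trim {E : V → V → Prop} {c l : V} :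
    ∀ (n : ℕ) (M : List V), M.length ≤ n → List.Chain E c (M ++ [l]) →
      ∃ M', List.Chain E c (M' ++ [l]) ∧ l ∉ M' := by
  intro n
  induction n with
  | zero =>
      intro M hlen hM
      rw [List.eq_nil_of_length_eq_zero (Nat.le_zero.mp hlen)] at hM
      exact ⟨[], hM, by simp⟩
  | succ n ih =>
      intro M hlen hM
      by_cases hl : l ∈ M
      · obtain ⟨s, t, rfl⟩ := List.append_of_mem hl
        rw [show (s ++ l :: t) ++ [l] = s ++ l :: (t ++ [l]) by simp] at hM
        have h1 := (List.chain_split.mp hM).1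
        have hslen : s.length ≤ n := by
          have := hlen
          simp [List.length_append] at this
          omega
        exact ih s hslen h1
      · exact ⟨M, hM, hl⟩

lemma transgen_chain {E : V → V → Prop} {c l : V} (h : Relation.TransGen E c l) :
    ∃ M : List V, List.Chain E c (M ++ [l]) ∧ l ∉ M := by
  obtain ⟨M, hM⟩ := transgen_chain_aux h
  exact chain_trim M.length M le_rfl hM

lemma runAux {E : V → V → Prop} (v : V) :
    ∀ (B : List V) (b0 x : V), List.Chain' (Adjd E) (x :: (b0 :: B) ++ [v]) →
      E x b0 → E v ((b0 :: B).getLast (by simp)) →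
      ∃ n k, WC E (x :: (b0 :: B) ++ [v]) n k ∧ Relation.ReflTransGen E x k := by
  intro B
  induction B with
  | nil =>
      intro b0 x hch hx hv
      refine ⟨0, b0, ⟨x, v, by simp, by simp, by simp, hx, ?_⟩, Relation.ReflTransGen.single hx⟩
      simpa using hv
  | cons b1 B ih =>
      intro b0 x hch hx hv
      by_cases h10 : E b1 b0
      · exact ⟨0, b0, ⟨x, b1, by simp, by simp, by simp, hx, h10⟩,
          Relation.ReflTransGen.single hx⟩
      · have hs : Adjd E x b0 ∧ Adjd E b0 b1 ∧ List.Chain' (Adjd E) (b1 :: (B ++ [v])) := by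
          simpa using hch
        have hch' : List.Chain' (Adjd E) (b0 :: (b1 :: B) ++ [v]) := by
          simp only [List.cons_append]
          exact List.isChain_cons_cons.mpr ⟨hs.2.1, hs.2.2⟩
        have h01 : E b0 b1 := hs.2.1.resolve_right h10
        have hv' : E v ((b1 :: B).getLast (by simp)) := by
          simpa [List.getLast_cons] using hv
        obtain ⟨n, k, hwc, hr⟩ := ih b1 b0 hch' h01 hv'
        obtain ⟨a, b, ha, hk, hb, e1, e2⟩ := hwc
        refine ⟨n + 1, k, ⟨a, b, ?_, ?_, ?_, e1, e2⟩, Relation.ReflTransGen.head hx hr⟩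
        · simpa using ha
        · simpa using hk
        · simpa using hb

lemma combine {E : V → V → Prop} {K : Set V} {i j l : V} (hl : l ∈ K)
    (X Y : List V)
    (hX : List.Chain' (Adjd E) (X ++ [l])) (hY : List.Chain' (Adjd E) (l :: Y))
    (hXh : X.head? = some i) (hYl : Y.getLast? = some j)
    (hXe : ∃ x, X.getLast? = some x ∧ E x l) (hYe : ∃ y, Y.head? = some y ∧ E y l)
    (hXn : NoColl E (X ++ [l])) (hYn : NoColl E (l :: Y))
    (hXK : ∀ k ∈ X, k ∉ K) (hYK : ∀ k ∈ Y, k ∉ K) :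
    GW E K i j (X ++ l :: Y) := by
  obtain ⟨x, hXlast, hxl⟩ := hXe
  obtain ⟨y, hYhead, hyl⟩ := hYe
  have hXne : X ≠ [] := by intro h; rw [h] at hXh; simp at hXh
  have hYne : Y ≠ [] := by intro h; rw [h] at hYl; simp at hYl
  have ha : 1 ≤ X.length := List.length_pos_iff.mpr hXne
  have hc : 1 ≤ Y.length := List.length_pos_iff.mpr hYne
  have gW1 : ∀ m, m < X.length → (X ++ l :: Y).get? m = X.get? m := fun m hm =>
    List.get?_append hm
  have gW2 : ∀ t, (X ++ l :: Y).get? (X.length + t) = (l :: Y).get? t := fun t => by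
    rw [List.get?_append_right (by omega)]; congr 1; omega
  have gXl : ∀ m, m ≤ X.length → (X ++ [l]).get? m = (X ++ l :: Y).get? m := by
    intro m hm
    rcases eq_or_lt_of_le hm with rfl | hm'
    · rw [List.get?_append_right le_rfl]
      rw [show (X ++ l :: Y) = X ++ (l :: Y) from rfl, List.get?_append_right le_rfl]
      simp
    · rw [gW1 m hm', List.get?_append hm']
  have key : ∀ n k, WC E (X ++ l :: Y) n k → n + 1 = X.length ∧ k = l := by
    intro n k hwc
    obtain ⟨aa, bb, hga, hgk, hgb, e1, e2⟩ := hwc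
    rcases lt_trichotomy (n+1) X.length with hlt | heq | hgt
    · exfalso
      refine hXn n k ⟨aa, bb, ?_, ?_, ?_, e1, e2⟩
      · rw [gXl n (by omega)]; exact hga
      · rw [gXl (n+1) (by omega)]; exact hgk
      · rw [gXl (n+2) (by omega)]; exact hgb
    · refine ⟨heq, ?_⟩
      rw [show n + 1 = X.length + 0 by omega, gW2 0] at hgk
      simp at hgk; exact hgk.symm
    · exfalso
      obtain ⟨t, rfl⟩ : ∃ t, n = X.length + t := ⟨n - X.length, by omega⟩
      refine hYn t k ⟨aa, bb, ?_, ?_, ?_, e1, e2⟩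
      · rw [← gW2 t]; exact hga
      · rw [← gW2 (t+1), show X.length + (t+1) = X.length + t + 1 by omega]; exact hgk
      · rw [← gW2 (t+2), show X.length + (t+2) = X.length + t + 2 by omega]; exact hgb
  have hjc : WC E (X ++ l :: Y) (X.length - 1) l := by
    refine ⟨x, y, ?_, ?_, ?_, hxl, hyl⟩
    · rw [gW1 (X.length - 1) (by omega), ← List.getLast?_eq_get?]; exact hXlast
    · rw [show X.length - 1 + 1 = X.length + 0 by omega, gW2 0]; simp
    · rw [show X.length - 1 + 2 = X.length + 1 by omega, gW2 1]
      rw [List.get?_cons_succ, List.get?_zero]; exact hYhead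
  refine ⟨?_, ?_, ?_, ?_, ?_, ?_⟩
  · rw [show X ++ l :: Y = (X ++ [l]) ++ Y by simp]
    refine List.isChain_append.mpr ⟨hX, ?_, ?_⟩
    · exact (List.isChain_append.mp (show List.Chain' (Adjd E) ([l] ++ Y) from hY)).2.1
    · intro z hz q hq
      have hz' : z = l := by
        rw [List.getLast?_concat] at hz
        exact (Option.some_inj.mp hz).symm
      rw [hz']
      exact (List.isChain_append.mp (show List.Chain' (Adjd E) ([l] ++ Y) from hY)).2.2 l
        (by simp) q hq
  · rw [← List.get?_zero, gW1 0 (by omega), List.get?_zero]; exact hXh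
  · rw [List.getLast?_eq_get?, show (X ++ l :: Y).length - 1 = X.length + Y.length by
      simp]
    rw [show X.length + Y.length = X.length + ((Y.length - 1) + 1) by omega, gW2]
    rw [List.get?_cons_succ, ← List.getLast?_eq_get?]; exact hYl
  · intro n k h
    obtain ⟨-, rfl⟩ := key n k h
    exact Or.inl hl
  · intro n k hgk hlen hnwc
    rcases lt_trichotomy (n+1) X.length with hlt | heq | hgt
    · have hx' : X.get? (n+1) = some k := by rw [← gW1 (n+1) hlt]; exact hgk
      exact hXK k (List.get?_mem hx')
    · exfalso
      have hkl : k = l := by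
        rw [show n + 1 = X.length + 0 by omega, gW2 0] at hgk
        simp at hgk; exact hgk.symm
      subst hkl
      rw [show n = X.length - 1 by omega] at hnwc
      exact hnwc hjc
    · have : Y.get? (n - X.length) = some k := by
        rw [show n + 1 = X.length + (n - X.length + 1) by omega, gW2,
          List.get?_cons_succ] at hgk
        exact hgk
      exact hYK k (List.get?_mem this)
  · intro n₁ k₁ n₂ k₂ h₁ h₂
    have e1 := (key _ _ h₁).1
    have e2 := (key _ _ h₂).1
    omega

lemma pair_split {v : V} : ∀ {w : List V}, List.Sublist [v, v] w →
    ∃ A B C : List V, w = A ++ (v :: (B ++ (v :: C))) := by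
  intro w h
  induction w with
  | nil => cases h
  | cons a w ih =>
      cases h with
      | cons _ h' =>
          obtain ⟨A, B, C, rfl⟩ := ih h'
          exact ⟨a :: A, B, C, rfl⟩
      | cons_cons _ h' =>
          have hv : v ∈ w := (List.singleton_sublist.mp h')
          obtain ⟨s, t, rfl⟩ := List.append_of_mem hv
          exact ⟨[], s, t, by simp⟩

lemma shortcut_core {E : V → V → Prop} {K : Set V} {i j v : V} (A B C : List V)
    (hA : Acyclic E) (hw : GW E K i j (A ++ (v :: (B ++ (v :: C))))) :
    GW E K i j (A ++ (v :: C)) := by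
  have hhd' : ∀ (X Y : List V) (x : V), (A ++ x :: X).head? = (A ++ x :: Y).head? := by
    intro X Y x; cases A <;> simp
  obtain ⟨hch, hhd, hlast, hcoll, hnon, hone⟩ := hw
  have hlen : (A ++ (v :: (B ++ (v :: C)))).length = A.length + B.length + C.length + 2 := by
    simp; omega
  have hlen' : (A ++ (v :: C)).length = A.length + C.length + 1 := by simp; omega
  -- get? facts for w
  have hwm : ∀ m, m < A.length → (A ++ (v :: (B ++ (v :: C)))).get? m = A.get? m := fun m hm =>
    List.get?_append hm
  have hwrest : ∀ s, (A ++ (v :: (B ++ (v :: C)))).get? (A.length + s)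
      = (v :: (B ++ (v :: C))).get? s :=
    fun s => by rw [List.get?_append_right (by omega)]; congr 1; omega
  have hwa : (A ++ (v :: (B ++ (v :: C)))).get? A.length = some v := by
    have := hwrest 0; simpa using this
  have hwB : ∀ t, t < B.length →
      (A ++ (v :: (B ++ (v :: C)))).get? (A.length + 1 + t) = B.get? t := by
    intro t ht
    have h1 := hwrest (1 + t)
    rw [show A.length + (1 + t) = A.length + 1 + t by omega] at h1
    rw [h1, show (1 + t) = t + 1 by omega, List.get?_cons_succ, List.get?_append ht]
  have hwv2 : (A ++ (v :: (B ++ (v :: C)))).get? (A.length + B.length + 1) = some v := by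
    have h1 := hwrest (B.length + 1)
    rw [show A.length + (B.length + 1) = A.length + B.length + 1 by omega] at h1
    rw [h1, List.get?_cons_succ, List.get?_append_right le_rfl]
    simp
  have hwC : ∀ t, (A ++ (v :: (B ++ (v :: C)))).get? (A.length + B.length + 2 + t)
      = C.get? t := by
    intro t
    have h1 := hwrest (B.length + 2 + t)
    rw [show A.length + (B.length + 2 + t) = A.length + B.length + 2 + t by omega] at h1
    rw [h1, show B.length + 2 + t = (B.length + 1 + t) + 1 by omega, List.get?_cons_succ,
      List.get?_append_right (by omega), show B.length + 1 + t - B.length = t + 1 by omega,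
      List.get?_cons_succ]
  -- get? facts for w'
  have hw'm : ∀ m, m < A.length → (A ++ (v :: C)).get? m = A.get? m := fun m hm =>
    List.get?_append hm
  have hw'rest : ∀ s, (A ++ (v :: C)).get? (A.length + s) = (v :: C).get? s :=
    fun s => by rw [List.get?_append_right (by omega)]; congr 1; omega
  have hw'a : (A ++ (v :: C)).get? A.length = some v := by
    have := hw'rest 0; simpa using this
  have hw'C : ∀ t, (A ++ (v :: C)).get? (A.length + 1 + t) = C.get? t := by
    intro t
    have h1 := hw'rest (1 + t)
    rw [show A.length + (1 + t) = A.length + 1 + t by omega] at h1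
    rw [h1, show (1 + t) = t + 1 by omega, List.get?_cons_succ]
  have hvals_low : ∀ m, m ≤ A.length →
      (A ++ (v :: C)).get? m = (A ++ (v :: (B ++ (v :: C)))).get? m := by
    intro m hm
    rcases eq_or_lt_of_le hm with rfl | h
    · rw [hw'a, hwa]
    · rw [hw'm m h, hwm m h]
  have hvals_high : ∀ m, A.length ≤ m →
      (A ++ (v :: C)).get? m = (A ++ (v :: (B ++ (v :: C)))).get? (m + B.length + 1) := by
    intro m hm
    rcases eq_or_lt_of_le hm with rfl | h
    · rw [hw'a, hwv2]
    · obtain ⟨t, rfl⟩ : ∃ t, m = A.length + 1 + t := ⟨m - A.length - 1, by omega⟩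
      rw [hw'C t, show A.length + 1 + t + B.length + 1 = A.length + B.length + 2 + t by omega,
        hwC t]
  have wc_low : ∀ n k, n + 2 ≤ A.length →
      (WC E (A ++ (v :: C)) n k ↔ WC E (A ++ (v :: (B ++ (v :: C)))) n k) := by
    intro n k h; unfold WC
    rw [hvals_low n (by omega), hvals_low (n+1) (by omega), hvals_low (n+2) (by omega)]
  have wc_high : ∀ n k, A.length ≤ n →
      (WC E (A ++ (v :: C)) n k ↔
        WC E (A ++ (v :: (B ++ (v :: C)))) (n + B.length + 1) k) := by
    intro n k h; unfold WC
    rw [hvals_high n h, hvals_high (n+1) (by omega), hvals_high (n+2) (by omega),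
      show n + 1 + B.length + 1 = n + B.length + 1 + 1 by omega,
      show n + 2 + B.length + 1 = n + B.length + 1 + 2 by omega]
  -- B nonempty
  have e1 : A ++ (v :: (B ++ (v :: C))) = (A ++ [v]) ++ (B ++ (v :: C)) := by simp
  have e2 : A ++ (v :: (B ++ (v :: C))) = (A ++ (v :: B)) ++ (v :: C) := by simp
  have hB : B ≠ [] := by
    rintro rfl
    have h1 := (List.isChain_append.mp (e1 ▸ hch)).2.2 v (by simp) v (by simp)
    rcases h1 with h | h <;> exact hA v (Relation.TransGen.single h)
  -- chain'
  have hc1 : List.Chain' (Adjd E) (A ++ [v]) := (List.isChain_append.mp (e1 ▸ hch)).1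
  have hc2 : List.Chain' (Adjd E) (v :: C) := (List.isChain_append.mp (e2 ▸ hch)).2.1
  have hchain' : List.Chain' (Adjd E) (A ++ (v :: C)) := by
    rw [show A ++ (v :: C) = (A ++ [v]) ++ C by simp]
    refine List.isChain_append.mpr ⟨hc1, ?_, ?_⟩
    · exact (List.isChain_append.mp (show List.Chain' (Adjd E) ([v] ++ C) from hc2)).2.1
    · intro z hz q hq
      have hz' : z = v := by
        rw [List.getLast?_concat] at hz
        exact (Option.some_inj.mp hz).symm
      rw [hz']
      exact (List.isChain_append.mp (show List.Chain' (Adjd E) ([v] ++ C) from hc2)).2.2 v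
        (by simp) q hq
  -- the key collider classification
  have key : ∀ n k, WC E (A ++ (v :: C)) n k →
      (n + 2 ≤ A.length ∧ WC E (A ++ (v :: (B ++ (v :: C)))) n k) ∨
      (A.length ≤ n ∧ WC E (A ++ (v :: (B ++ (v :: C)))) (n + B.length + 1) k) ∨
      (n + 1 = A.length ∧ k = v ∧ InAn E K k ∧
        ∃ n₀ q₀, WC E (A ++ (v :: (B ++ (v :: C)))) n₀ q₀ ∧ A.length ≤ n₀ + 1 ∧
          n₀ ≤ A.length + B.length) := by
    intro n k hwc
    rcases lt_trichotomy (n+1) A.length with hlt | heq | hgt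
    · exact Or.inl ⟨by omega, (wc_low n k (by omega)).mp hwc⟩
    · right; right
      obtain ⟨aa, bb, hga, hgk, hgb, ea, eb⟩ := hwc
      have hkv : k = v := by
        rw [heq, hw'a] at hgk
        exact (Option.some_inj.mp hgk).symm
      subst hkv
      have haA : A.get? n = some aa := by
        rw [← hw'm n (by omega)]; exact hga
      have hbC : C.get? 0 = some bb := by
        rw [show n + 2 = A.length + 1 + 0 by omega, hw'C 0] at hgb
        exact hgb
      obtain ⟨b0, Brest, rfl⟩ : ∃ b0 Brest, B = b0 :: Brest := by
        cases B with
        | nil => exact absurd rfl hB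
        | cons x xs => exact ⟨x, xs, rfl⟩
      have hgb0 : (A ++ (k :: ((b0 :: Brest) ++ (k :: C)))).get? (A.length + 1) = some b0 := by
        have := hwB 0 (by simp)
        simpa using this
      by_cases hf1 : E b0 k
      · have hwcol : WC E (A ++ (k :: ((b0 :: Brest) ++ (k :: C)))) (A.length - 1) k := by
          refine ⟨aa, b0, ?_, ?_, ?_, ea, hf1⟩
          · rw [hwm (A.length - 1) (by omega), show A.length - 1 = n by omega]; exact haA
          · rw [show A.length - 1 + 1 = A.length by omega]; exact hwa
          · rw [show A.length - 1 + 2 = A.length + 1 by omega]; exact hgb0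
        exact ⟨heq, rfl, hcoll _ _ hwcol, ⟨A.length - 1, k, hwcol, by omega, by omega⟩⟩
      · have hgbl : (A ++ (k :: ((b0 :: Brest) ++ (k :: C)))).get?
            (A.length + (b0 :: Brest).length) = some ((b0 :: Brest).getLast (by simp)) := by
          have h2 := hwB ((b0 :: Brest).length - 1) (by simp)
          rw [show A.length + 1 + ((b0 :: Brest).length - 1) =
            A.length + (b0 :: Brest).length by simp; omega] at h2
          rw [h2, ← List.getLast?_eq_get?, List.getLast?_eq_getLast (l := b0 :: Brest) (by simp)]
        by_cases hf2 : E ((b0 :: Brest).getLast (by simp)) k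
        · have hwcol : WC E (A ++ (k :: ((b0 :: Brest) ++ (k :: C))))
              (A.length + (b0 :: Brest).length) k := by
            refine ⟨(b0 :: Brest).getLast (by simp), bb, hgbl, ?_, ?_, hf2, eb⟩
            · rw [show A.length + (b0 :: Brest).length + 1 =
                A.length + (b0 :: Brest).length + 1 from rfl]
              exact hwv2
            · rw [show A.length + (b0 :: Brest).length + 2 =
                A.length + (b0 :: Brest).length + 2 + 0 by omega]
              rw [hwC 0]; exact hbC
          exact ⟨heq, rfl, hcoll _ _ hwcol, ⟨A.length + (b0 :: Brest).length, k, hwcol,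
            by omega, by omega⟩⟩
        · -- both edges out of v: find collider inside B
          have einf : A ++ (k :: ((b0 :: Brest) ++ (k :: C))) =
              A ++ ((k :: b0 :: Brest) ++ [k]) ++ C := by simp
          have hchB : List.Chain' (Adjd E) ((k :: b0 :: Brest) ++ [k]) := by
            have h3 := (List.isChain_append.mp (einf ▸ hch)).1
            exact (List.isChain_append.mp h3).2.1
          have hvb0 : E k b0 := by
            have := chain'_get? hch hwa (by
              rw [show A.length + 1 = A.length + 1 from rfl]; exact hgb0)
            exact this.resolve_right hf1
          have hvbl : E k ((b0 :: Brest).getLast (by simp)) := by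
            have h4 := chain'_get? hch hgbl hwv2
            exact h4.resolve_left hf2
          obtain ⟨n₀, k₀, hwc₀, hreach⟩ := runAux k Brest b0 k hchB hvb0 hvbl
          have hlift : WC E (A ++ (k :: ((b0 :: Brest) ++ (k :: C)))) (A.length + n₀) k₀ := by
            have h5 := WC_infix A C hwc₀
            rwa [← einf] at h5
          have hbound : n₀ + 2 < ((k :: b0 :: Brest) ++ [k]).length := by
            obtain ⟨_, _, _, _, hx, _, _⟩ := hwc₀
            exact gsome hx
          simp at hbound
          refine ⟨heq, rfl, ?_, ⟨A.length + n₀, k₀, hlift, by omega, by simp; omega⟩⟩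
          exact InAn_of_reach hreach (hcoll _ _ hlift)
    · exact Or.inr (Or.inl ⟨by omega, (wc_high n k (by omega)).mp hwc⟩)
  refine ⟨hchain', ?_, ?_, ?_, ?_, ?_⟩
  · rw [hhd' C (B ++ (v :: C)) v]; exact hhd
  · rw [List.getLast?_append_of_ne_nil _ (by simp : v :: C ≠ [])]
    rw [e2, List.getLast?_append_of_ne_nil _ (by simp : v :: C ≠ [])] at hlast
    exact hlast
  · intro n k h
    rcases key n k h with ⟨-, h'⟩ | ⟨-, h'⟩ | ⟨-, -, h', -⟩
    · exact hcoll _ _ h'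
    · exact hcoll _ _ h'
    · exact h'
  · intro n k hgk hlen2 hnwc
    rcases lt_trichotomy (n+1) A.length with hlt | heq | hgt
    · refine hnon n k ?_ ?_ ?_
      · rw [← hvals_low (n+1) (by omega)]; exact hgk
      · rw [hlen]; rw [hlen'] at hlen2; omega
      · intro hc; exact hnwc ((wc_low n k (by omega)).mpr hc)
    · -- junction: k = v
      have hkv : k = v := by
        rw [show n + 1 = A.length from heq, hw'a] at hgk
        exact (Option.some_inj.mp hgk).symm
      subst hkv
      have hcge : 1 ≤ C.length := by
        rw [hlen'] at hlen2; omega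
      obtain ⟨aa, haa⟩ := gsome' (show A.length - 1 < A.length by omega)
      obtain ⟨bb, hbb⟩ := gsome' (show 0 < C.length by omega)
      by_cases hax : E aa k
      · have hbv : ¬ E bb k := by
          intro hbv
          refine hnwc ⟨aa, bb, ?_, ?_, ?_, hax, hbv⟩
          · rw [show n = A.length - 1 by omega, hw'm _ (by omega)]; exact haa
          · rw [show n + 1 = A.length from heq]; exact hw'a
          · rw [show n + 2 = A.length + 1 + 0 by omega, hw'C 0]; exact hbb
        refine hnon (A.length + B.length) k ?_ ?_ ?_
        · exact hwv2
        · rw [hlen]; omega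
        · rintro ⟨aa', bb', hga', hgk', hgb', ea', eb'⟩
          rw [show A.length + B.length + 2 = A.length + B.length + 2 + 0 by omega, hwC 0,
            hbb] at hgb'
          exact hbv (by rw [Option.some_inj.mp hgb']; exact eb')
      · refine hnon (A.length - 1) k ?_ ?_ ?_
        · rw [show A.length - 1 + 1 = A.length by omega]; exact hwa
        · rw [hlen]; omega
        · rintro ⟨aa', bb', hga', hgk', hgb', ea', eb'⟩
          rw [hwm _ (by omega), haa] at hga'
          exact hax (by rw [Option.some_inj.mp hga']; exact ea')
    · refine hnon (n + B.length + 1) k ?_ ?_ ?_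
      · rw [show n + B.length + 1 + 1 = (n + 1) + B.length + 1 by omega,
          ← hvals_high (n+1) (by omega)]
        exact hgk
      · rw [hlen]; rw [hlen'] at hlen2; omega
      · intro hc; exact hnwc ((wc_high n k (by omega)).mpr hc)
  · intro n₁ k₁ n₂ k₂ h₁ h₂
    rcases key n₁ k₁ h₁ with ⟨hb1, hw1⟩ | ⟨hb1, hw1⟩ | ⟨hb1, -, -, n₀, q₀, hw1, hb1a, hb1b⟩ <;>
      rcases key n₂ k₂ h₂ with ⟨hb2, hw2⟩ | ⟨hb2, hw2⟩ | ⟨hb2, -, -, n₀', q₀', hw2, hb2a, hb2b⟩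
    · exact hone _ _ _ _ hw1 hw2
    · have := hone _ _ _ _ hw1 hw2; omega
    · have := hone _ _ _ _ hw1 hw2; omega
    · have := hone _ _ _ _ hw1 hw2; omega
    · have := hone _ _ _ _ hw1 hw2; omega
    · have := hone _ _ _ _ hw1 hw2; omega
    · have := hone _ _ _ _ hw1 hw2; omega
    · have := hone _ _ _ _ hw1 hw2; omega
    · omega

lemma extract {E : V → V → Prop} {K : Set V} {i j : V} (hA : Acyclic E) :
    ∀ n (w : List V), w.length ≤ n → GW E K i j w → ∃ p, GW E K i j p ∧ p.Nodup := by
  intro n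
  induction n with
  | zero =>
      intro w hl hw
      refine ⟨w, hw, ?_⟩
      cases w with
      | nil => simp
      | cons a t => simp at hl
  | succ n ih =>
      intro w hl hw
      by_cases hnd : w.Nodup
      · exact ⟨w, hw, hnd⟩
      · obtain ⟨v, hdup⟩ := List.exists_duplicate_iff_not_nodup.mpr hnd
        obtain ⟨A, B, C, rfl⟩ := pair_split (List.duplicate_iff_sublist.mp hdup)
        refine ih (A ++ (v :: C)) ?_ (shortcut_core A B C hA hw)
        simp at hl ⊢
        omega

lemma half {E : V → V → Prop} {K : Set V} {i l : V} (hA : Acyclic E) (p : List V)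
    (hch : p.Chain' (Adjd E)) (hhd : p.head? = some i)
    {n1 : ℕ} {c1 : V} (hc : WC E p n1 c1)
    (hmin : ∀ n k, WC E p n k → n1 ≤ n)
    (hnon : ∀ n k, p.get? (n+1) = some k → n + 2 < p.length → ¬ WC E p n k → k ∉ K)
    (hiK : i ∉ K) (hKl : ∀ x, x ∈ K ↔ x = l) (han : InAn E K c1) :
    ∃ X : List V, X ≠ [] ∧ List.Chain' (Adjd E) (X ++ [l]) ∧ X.head? = some i ∧
      (∃ x, X.getLast? = some x ∧ E x l) ∧ NoColl E (X ++ [l]) ∧ ∀ k ∈ X, k ∉ K := by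
  obtain ⟨aa, bb, hga, hgk, hgb, ea, eb⟩ := hc
  have hL : n1 + 2 < p.length := gsome hgb
  have htk : ∀ t m, m < t → (p.take t).get? m = p.get? m := fun t m hm => List.get?_take hm
  have htlen : ∀ t, t ≤ p.length → (p.take t).length = t := fun t ht => by
    rw [List.length_take]; omega
  have NC : ∀ t, t ≤ n1 + 2 → NoColl E (p.take t) := by
    intro t ht n k hw
    obtain ⟨a, b, ha, hk, hb, e1, e2⟩ := hw
    have hlt : n + 2 < t := by
      have := gsome hb
      rw [List.length_take] at this
      omega
    rw [htk t n (by omega)] at ha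
    rw [htk t (n+1) (by omega)] at hk
    rw [htk t (n+2) (by omega)] at hb
    have := hmin n k ⟨a, b, ha, hk, hb, e1, e2⟩
    omega
  have memtk : ∀ t, t ≤ n1 + 1 → ∀ k, k ∈ p.take t → k ∉ K := by
    intro t ht k hk
    obtain ⟨m, hm⟩ := List.mem_iff_get?.mp hk
    have hmt : m < t := by
      have := gsome hm
      rw [List.length_take] at this
      omega
    rw [htk t m hmt] at hm
    cases m with
    | zero =>
        rw [List.get?_zero, hhd] at hm
        rw [← Option.some_inj.mp hm]
        exact hiK
    | succ s =>
        refine hnon s k hm (by omega) ?_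
        intro hw
        have := hmin s k hw
        omega
  by_cases hc1l : c1 = l
  · subst hc1l
    have h0 : n1 + 1 < p.length := by omega
    have hgc : p[n1+1] = c1 := by
      have h0' := List.get?_eq_get h0
      rw [h0'] at hgk
      exact Option.some_inj.mp hgk
    have hXl : p.take (n1+1) ++ [c1] = p.take (n1+2) := by
      rw [← hgc]
      exact List.take_concat_get' p (n1+1) h0
    refine ⟨p.take (n1+1), ?_, ?_, ?_, ⟨aa, ?_, ea⟩, ?_, memtk (n1+1) le_rfl⟩
    · have := htlen (n1+1) (by omega)
      intro hemp
      rw [hemp] at this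
      simp at this
    · rw [hXl]
      exact hch.prefix (List.take_prefix _ _)
    · rw [← List.get?_zero, htk (n1+1) 0 (by omega), List.get?_zero]
      exact hhd
    · rw [List.getLast?_eq_get?, htlen (n1+1) (by omega)]
      simp only [Nat.add_sub_cancel]
      rw [htk (n1+1) n1 (by omega)]
      exact hga
    · rw [hXl]
      exact NC (n1+2) le_rfl
  · have htg : Relation.TransGen E c1 l := by
      rcases han with h | ⟨m, hm, htg⟩
      · exact absurd ((hKl c1).mp h) hc1l
      · rwa [(hKl m).mp hm] at htg
    obtain ⟨M, hM, hlM⟩ := transgen_chain htg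
    have hMc : List.Chain' E (c1 :: (M ++ [l])) := hM
    have hTlen : (p.take (n1+2)).length = n1 + 2 := htlen (n1+2) (by omega)
    have hTlast : (p.take (n1+2)).get? (n1+1) = some c1 := by
      rw [htk (n1+2) (n1+1) (by omega)]
      exact hgk
    have hTlast? : (p.take (n1+2)).getLast? = some c1 := by
      rw [List.getLast?_eq_get?, hTlen]
      simpa using hTlast
    refine ⟨p.take (n1+2) ++ M, ?_, ?_, ?_, ?_, ?_, ?_⟩
    · intro hemp
      obtain ⟨h1, -⟩ := List.append_eq_nil_iff.mp hemp
      have := congrArg List.length h1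
      rw [hTlen] at this
      simp at this
    · rw [List.append_assoc]
      refine List.isChain_append.mpr ⟨hch.prefix (List.take_prefix _ _), ?_, ?_⟩
      · exact List.Chain'.imp (fun a b h => Or.inl h) (List.chain'_cons'.mp hMc).2
      · intro x hx y hy
        rw [hTlast?] at hx
        rw [(Option.some_inj.mp hx).symm]
        exact Or.inl ((List.chain'_cons'.mp hMc).1 y hy)
    · rw [← List.get?_zero, List.get?_append (by omega), htk (n1+2) 0 (by omega),
        List.get?_zero]
      exact hhd
    · cases M with
      | nil =>
          refine ⟨c1, ?_, ?_⟩
          · simpa using hTlast?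
          · simpa using (List.chain_cons.mp hM).1
      | cons m0 M' =>
          refine ⟨(m0 :: M').getLast (by simp), ?_, ?_⟩
          · rw [List.getLast?_append_of_ne_nil _ (by simp : m0 :: M' ≠ [])]
            rw [List.getLast?_eq_getLast (l := m0 :: M') (by simp)]
          · have h9 : List.Chain' E ((c1 :: m0 :: M') ++ [l]) := hMc
            have := (List.isChain_append.mp h9).2.2 ((c1 :: m0 :: M').getLast (by simp))
              (by rw [List.getLast?_eq_getLast (l := c1 :: m0 :: M') (by simp)]; exact rfl) l (by simp)
            rwa [List.getLast_cons (by simp)] at this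
    · -- NoColl
      intro n k hw
      obtain ⟨a, b, ha, hk, hb, e1, e2⟩ := hw
      have hgen : ∀ idx z, n1 + 1 ≤ idx →
          ((p.take (n1+2) ++ M) ++ [l]).get? idx = some z →
          (c1 :: (M ++ [l])).get? (idx - (n1+1)) = some z := by
        intro idx z hidx hz
        rw [List.append_assoc] at hz
        rcases eq_or_lt_of_le hidx with rfl | hlt
        · rw [List.get?_append (by omega), hTlast] at hz
          rw [Nat.sub_self]
          exact hz
        · rw [List.get?_append_right (by omega), hTlen] at hz
          rw [show idx - (n1+1) = (idx - (n1+2)) + 1 by omega, List.get?_cons_succ]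
          exact hz
      rcases lt_or_ge n n1 with hlt | hge
      · -- inside the take-part
        rw [List.append_assoc] at ha hk hb
        rw [List.get?_append (by omega), htk (n1+2) n (by omega)] at ha
        rw [List.get?_append (by omega), htk (n1+2) (n+1) (by omega)] at hk
        rw [List.get?_append (by omega), htk (n1+2) (n+2) (by omega)] at hb
        have := hmin n k ⟨a, b, ha, hk, hb, e1, e2⟩
        omega
      · -- in the directed part
        have h1 := hgen (n+1) k (by omega) hk
        have h2 := hgen (n+2) b (by omega) hb
        rw [show n + 2 - (n1+1) = (n + 1 - (n1+1)) + 1 by omega] at h2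
        have hEkb : E k b := chain'_get? hMc h1 h2
        exact hA k (Relation.TransGen.head hEkb (Relation.TransGen.single e2))
    · intro k hk
      rcases List.mem_append.mp hk with hk | hk
      · obtain ⟨m, hm⟩ := List.mem_iff_get?.mp hk
        have hmt : m < n1 + 2 := by
          have := gsome hm
          rw [hTlen] at this
          exact this
        rw [htk (n1+2) m hmt] at hm
        rcases lt_or_ge m (n1+1) with hmlt | hmge
        · exact memtk (n1+1) le_rfl k (by
            rw [List.mem_iff_get?]
            exact ⟨m, by rw [htk (n1+1) m hmlt]; exact hm⟩)
        · have hmeq : m = n1 + 1 := by omega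
          rw [hmeq, hgk] at hm
          rw [← Option.some_inj.mp hm]
          intro hkK
          exact hc1l ((hKl c1).mp hkK)
      · intro hkK
        rw [(hKl k).mp hkK] at hk
        exact hlM hk

lemma chain'_adjd_rev {E : V → V → Prop} {p : List V} (h : List.Chain' (Adjd E) p) :
    List.Chain' (Adjd E) p.reverse := by
  rw [List.chain'_reverse]
  exact List.Chain'.imp (fun a b hab => hab.symm) h


lemma GW_to_star {E : V → V → Prop} {K : Set V} {i j : V} {q : List V}
    (h : GW E K i j q) (hnd : q.Nodup) : StarConnecting E K q i j := by
  obtain ⟨hch, hhd, hlast, hcoll, hnon, hone⟩ := h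
  refine ⟨⟨⟨hch, hhd, hlast, hnd⟩, ?_, ?_⟩, ?_⟩
  · intro k hk
    obtain ⟨n, hn⟩ := isColliderOn_iff_WC.mp hk
    exact hcoll n k hn
  · intro k hk hnc
    obtain ⟨n, hgk, hb⟩ := mem_interior_iff.mp hk
    exact hnon n k hgk hb (fun hw => hnc (isColliderOn_iff_WC.mpr ⟨n, hw⟩))
  · intro k₁ k₂ h₁ h₂
    obtain ⟨n₁, hn₁⟩ := isColliderOn_iff_WC.mp h₁
    obtain ⟨n₂, hn₂⟩ := isColliderOn_iff_WC.mp h₂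
    have heq := hone n₁ k₁ n₂ k₂ hn₁ hn₂
    obtain ⟨_, _, _, hg1, _, _, _⟩ := hn₁
    obtain ⟨_, _, _, hg2, _, _, _⟩ := hn₂
    rw [heq, hg2] at hg1
    exact (Option.some_inj.mp hg1).symm


/-- For a DAG, nodes `i`, `j` and a conditioning set `K ⊆ V \ {i,j}` with
`|K| ≤ 1`, `i` and `j` are d-separated given `K` iff they are *-separated given `K`. -/
theorem dsep_iff_starsep_of_card_le_one
    (E : V → V → Prop) (hA : Acyclic E) (i j : V) (K : Set V)
    (hiK : i ∉ K) (hjK : j ∉ K) (hK : K.Subsingleton) :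
    DSep E K i j ↔ StarSep E K i j := by
  constructor
  · intro hd
    rintro ⟨p, hsp⟩
    exact hd ⟨p, hsp.1⟩
  · intro hs
    rintro ⟨p, hp⟩
    obtain ⟨⟨hch, hhd, hlast, hnd⟩, hcol, hncol⟩ := hp
    have hcolls : ∀ n k, WC E p n k → InAn E K k := fun n k h =>
      hcol k (isColliderOn_iff_WC.mpr ⟨n, h⟩)
    have hnon : ∀ n k, p.get? (n+1) = some k → n + 2 < p.length → ¬ WC E p n k → k ∉ K := by
      intro n k hk hb hnw
      refine hncol k (mem_interior_iff.mpr ⟨n, hk, hb⟩) ?_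
      intro hcolk
      obtain ⟨m, hm⟩ := isColliderOn_iff_WC.mp hcolk
      obtain ⟨a, b, hma, hmk, hmb, e1, e2⟩ := hm
      have : m + 1 = n + 1 := List.get?_inj (gsome hmk) hnd (by rw [hmk, hk])
      have hmn : m = n := by omega
      rw [hmn] at hma hmk hmb
      exact hnw ⟨a, b, hma, hmk, hmb, e1, e2⟩
    by_cases hex : ∃ n k, WC E p n k
    · obtain ⟨n₁₀, k₁₀, hw₀⟩ := hex
      classical
      have hPex : ∃ n, ∃ k, WC E p n k := ⟨n₁₀, k₁₀, hw₀⟩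
      set n1 := Nat.find hPex with hn1def
      obtain ⟨c1, hc1⟩ := Nat.find_spec hPex
      have hmin : ∀ n k, WC E p n k → n1 ≤ n := fun n k h => Nat.find_min' hPex ⟨k, h⟩
      set n2 := Nat.findGreatest (fun n => ∃ k, WC E p n k) p.length with hn2def
      have hmax : ∀ n k, WC E p n k → n ≤ n2 := by
        intro n k h
        refine Nat.le_findGreatest ?_ ⟨k, h⟩
        obtain ⟨_, _, _, _, hb, _, _⟩ := h
        have := gsome hb
        omega
      have hn1b : n1 + 2 < p.length := by
        obtain ⟨_, _, _, _, hb, _, _⟩ := hc1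
        exact gsome hb
      obtain ⟨c2, hc2⟩ : ∃ k, WC E p n2 k :=
        Nat.findGreatest_spec (P := fun n => ∃ k, WC E p n k) (m := n1) (n := p.length) (by omega) ⟨c1, hc1⟩
      have hn2b : n2 + 2 < p.length := by
        obtain ⟨_, _, _, _, hb, _, _⟩ := hc2
        exact gsome hb
      by_cases h12 : n1 = n2
      · refine hs ⟨p, GW_to_star ⟨hch, hhd, hlast, hcolls, hnon, ?_⟩ hnd⟩
        intro a ka b kb hwa hwb
        have h1 := hmin _ _ hwa
        have h2 := hmax _ _ hwa
        have h3 := hmin _ _ hwb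
        have h4 := hmax _ _ hwb
        omega
      · have hKne : ∃ l, l ∈ K := by
          rcases hcolls n1 c1 hc1 with h | ⟨m, hm, -⟩
          · exact ⟨c1, h⟩
          · exact ⟨m, hm⟩
        obtain ⟨l, hl⟩ := hKne
        have hKl : ∀ x, x ∈ K ↔ x = l := fun x => ⟨fun hx => hK hx hl, fun hx => hx ▸ hl⟩
        obtain ⟨X, hXne, hXch, hXhd, hXe, hXnc, hXK⟩ :=
          half hA p hch hhd hc1 hmin hnon hiK hKl (hcolls _ _ hc1)
        -- reverse side
        have hrch : List.Chain' (Adjd E) p.reverse := chain'_adjd_rev hch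
        have hrhd : p.reverse.head? = some j := by
          rw [List.head?_reverse]; exact hlast
        have hrc : WC E p.reverse (p.length - n2 - 3) c2 := WC_rev hc2
        have hrmin : ∀ n k, WC E p.reverse n k → p.length - n2 - 3 ≤ n := by
          intro n k h
          have hnb : n + 2 < p.length := by
            obtain ⟨_, _, _, _, hb, _, _⟩ := h
            have := gsome hb
            rwa [List.length_reverse] at this
          have h' := WC_rev h
          rw [List.reverse_reverse, List.length_reverse] at h'
          have := hmax _ _ h'
          omega
        have hrnon : ∀ n k, p.reverse.get? (n+1) = some k → n + 2 < p.reverse.length →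
            ¬ WC E p.reverse n k → k ∉ K := by
          intro n k hk hb hnw
          rw [List.length_reverse] at hb
          rw [List.get?_reverse (show n + 1 < p.length by omega)] at hk
          refine hnon (p.length - n - 3) k ?_ ?_ ?_
          · rw [show p.length - n - 3 + 1 = p.length - 1 - (n+1) by omega]
            exact hk
          · omega
          · intro hw
            have h6 := WC_rev hw
            rw [show p.length - (p.length - n - 3) - 3 = n by omega] at h6
            exact hnw h6
        obtain ⟨X', hX'ne, hX'ch, hX'hd, hX'e, hX'nc, hX'K⟩ :=
          half hA p.reverse hrch hrhd hrc hrmin hrnon hjK hKl (hcolls _ _ hc2)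
        have hrevlem : (X' ++ [l]).reverse = l :: X'.reverse := by simp
        have hYch : List.Chain' (Adjd E) (l :: X'.reverse) := by
          have h7 := chain'_adjd_rev hX'ch
          rwa [hrevlem] at h7
        have hYlast : X'.reverse.getLast? = some j := by
          rw [List.getLast?_reverse]; exact hX'hd
        have hYe : ∃ y, X'.reverse.head? = some y ∧ E y l := by
          obtain ⟨x', hx', he⟩ := hX'e
          exact ⟨x', by rw [List.head?_reverse]; exact hx', he⟩
        have hYnc : NoColl E (l :: X'.reverse) := by
          have h8 := NoColl_rev hX'nc
          rwa [hrevlem] at h8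
        have hYK : ∀ k ∈ X'.reverse, k ∉ K := fun k hk => hX'K k (List.mem_reverse.mp hk)
        have hGW := combine hl X X'.reverse hXch hYch hXhd hYlast hXe hYe hXnc hYnc hXK hYK
        obtain ⟨q, hq, hqnd⟩ := extract hA _ _ le_rfl hGW
        exact hs ⟨q, GW_to_star hq hqnd⟩
    · refine hs ⟨p, GW_to_star ⟨hch, hhd, hlast, hcolls, hnon, ?_⟩ hnd⟩
      intro a ka b kb hwa _
      exact absurd ⟨a, ka, hwa⟩ hex
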